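/- Let T > 0, v⁽¹⁾ ∈ ℝᵐ, v⁽²⁾ ∈ ℝᵈ. Let 𝒦 : [0,T] → ℝ^{m×m} and N : [0,T] → ℝ^{m×d} be continuous, let B₀ ∈ ℝ^{m×d} be constant, and let φ ∈ C¹([0,T]) satisfy φ(0) = φ(T) = 0. Let ξ : [0,T] → ℝ be continuous and increasing with ξ(t) > 0 for t ∈ (0,T]. Set Q_t := ∫₀ᵗ φ(s) 𝒦(s)N(s)B₀* 𝒦(s)* ds and assume that Q_t is invertible for every t ∈ (0,T] with ‖Q_t⁻¹‖ ≤ c/ξ(t) for some constant c > 0. Define, for t ∈ [0,T], α_t := ((T−t)/T) v⁽²⁾ − φ(t) B₀* 𝒦(t)* Q_T⁻¹ ∫₀ᵀ ((T−s)/T) 𝒦(s)N(s) v⁽²⁾ ds − (φ(t) B₀* 𝒦(t)* / ∫₀ᵀ ξ(s)² ds) ∫ₜᵀ ξ(s)² Q_s⁻¹ 𝒦(0)v⁽¹⁾ ds. Then α₀ = v⁽²⁾, α_T = 0, and 𝒦(0)v⁽¹⁾ + ∫₀ᵀ 𝒦(t)N(t) α_t dt = 0. -/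

import Mathlib

open scoped RealInnerProductSpace

open MeasureTheory Set intervalIntegral

set_option maxHeartbeats 1000000 in
/-- the deterministic verification in the proof of Theorem 1.2(2).
The control `α` defined by formula (1.9) of the paper satisfies `α₀ = v⁽²⁾`, `α_T = 0`
and `𝒦(0)v⁽¹⁾ + ∫₀ᵀ 𝒦(t)N(t)α_t dt = 0`.  Here `𝒦(s)` plays the role of `K(T,s)` and
`N(s)` the role of `∇⁽²⁾Z⁽¹⁾(X_s)`. -/
theorem stmt3 (m d : ℕ) (T : ℝ) (hT : 0 < T)
    (v1 : EuclideanSpace ℝ (Fin m)) (v2 : EuclideanSpace ℝ (Fin d))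
    (𝒦 : ℝ → EuclideanSpace ℝ (Fin m) →L[ℝ] EuclideanSpace ℝ (Fin m))
    (h𝒦 : ContinuousOn 𝒦 (Set.Icc 0 T))
    (N : ℝ → EuclideanSpace ℝ (Fin d) →L[ℝ] EuclideanSpace ℝ (Fin m))
    (hN : ContinuousOn N (Set.Icc 0 T))
    (B₀ : EuclideanSpace ℝ (Fin d) →L[ℝ] EuclideanSpace ℝ (Fin m))
    (φ φ' : ℝ → ℝ)
    (hφ : ∀ t ∈ Set.Icc (0:ℝ) T, HasDerivWithinAt φ (φ' t) (Set.Icc 0 T) t)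
    (hφ'c : ContinuousOn φ' (Set.Icc 0 T))
    (hφ0 : φ 0 = 0) (hφT : φ T = 0)
    (ξ : ℝ → ℝ) (hξc : ContinuousOn ξ (Set.Icc 0 T))
    (hξmono : MonotoneOn ξ (Set.Icc 0 T))
    (hξpos : ∀ t ∈ Set.Ioc (0:ℝ) T, 0 < ξ t)
    (Q : ℝ → EuclideanSpace ℝ (Fin m) →L[ℝ] EuclideanSpace ℝ (Fin m))
    (hQ : ∀ t, Q t = ∫ s in (0:ℝ)..t,
      φ s • (((𝒦 s).comp (N s)).comp (B₀.adjoint.comp (𝒦 s).adjoint)))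
    (Qinv : ℝ → EuclideanSpace ℝ (Fin m) →L[ℝ] EuclideanSpace ℝ (Fin m))
    (hQinv : ∀ t ∈ Set.Ioc (0:ℝ) T,
      (Q t).comp (Qinv t) = ContinuousLinearMap.id ℝ (EuclideanSpace ℝ (Fin m)) ∧
      (Qinv t).comp (Q t) = ContinuousLinearMap.id ℝ (EuclideanSpace ℝ (Fin m)))
    (c : ℝ) (hc : 0 < c)
    (hQbnd : ∀ t ∈ Set.Ioc (0:ℝ) T, ‖Qinv t‖ ≤ c / ξ t)
    (α : ℝ → EuclideanSpace ℝ (Fin d))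
    (hα : ∀ t ∈ Set.Icc (0:ℝ) T, α t =
      ((T - t) / T) • v2
      - φ t • B₀.adjoint ((𝒦 t).adjoint
          (Qinv T (∫ s in (0:ℝ)..T, ((T - s) / T) • (𝒦 s) (N s v2))))
      - (φ t / ∫ s in (0:ℝ)..T, ξ s ^ 2) • B₀.adjoint ((𝒦 t).adjoint
          (∫ s in t..T, ξ s ^ 2 • Qinv s ((𝒦 0) v1)))) :
    α 0 = v2 ∧ α T = 0 ∧
      (𝒦 0) v1 + (∫ t in (0:ℝ)..T, (𝒦 t) (N t (α t))) = 0 := by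
  have hT0 : (0:ℝ) ≤ T := hT.le
  have hTIcc : T ∈ Set.Icc (0:ℝ) T := Set.right_mem_Icc.2 hT0
  have hTIoc : T ∈ Set.Ioc (0:ℝ) T := ⟨hT, le_refl T⟩
  -- abbreviations
  set u : EuclideanSpace ℝ (Fin m) := (𝒦 0) v1 with hu
  set w : EuclideanSpace ℝ (Fin m) :=
    ∫ s in (0:ℝ)..T, ((T - s) / T) • (𝒦 s) (N s v2) with hw
  set J : ℝ := ∫ s in (0:ℝ)..T, ξ s ^ 2 with hJdef
  set M : ℝ → EuclideanSpace ℝ (Fin m) →L[ℝ] EuclideanSpace ℝ (Fin m) :=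
    fun s => φ s • (((𝒦 s).comp (N s)).comp (B₀.adjoint.comp (𝒦 s).adjoint)) with hMdef
  set f : ℝ → EuclideanSpace ℝ (Fin m) :=
    fun s => ξ s ^ 2 • Qinv s u with hfdef
  set R : ℝ → EuclideanSpace ℝ (Fin m) := fun t => ∫ s in t..T, f s with hRdef
  have hQM : ∀ t, Q t = ∫ s in (0:ℝ)..t, M s := hQ
  -- boundary values of α
  have hα0 : α 0 = v2 := by
    rw [hα 0 (Set.left_mem_Icc.2 hT0), hφ0]
    simp [div_self hT.ne']
  have hαT : α T = 0 := by
    rw [hα T hTIcc, hφT]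
    simp
  refine ⟨hα0, hαT, ?_⟩
  -- continuity of φ
  have hφc : ContinuousOn φ (Set.Icc 0 T) := fun t ht => (hφ t ht).continuousWithinAt
  -- continuity of M
  have hadj : ContinuousOn (fun s => (𝒦 s).adjoint) (Set.Icc 0 T) :=
    (ContinuousLinearMap.adjoint (𝕜 := ℝ)
      (E := EuclideanSpace ℝ (Fin m)) (F := EuclideanSpace ℝ (Fin m))).continuous.comp_continuousOn h𝒦
  have hMc : ContinuousOn M (Set.Icc 0 T) :=
    hφc.smul ((h𝒦.clm_comp hN).clm_comp (continuousOn_const.clm_comp hadj))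
  have hMint : ∀ t ∈ Set.Icc (0:ℝ) T, IntervalIntegrable M volume 0 t := by
    intro t ht
    apply ContinuousOn.intervalIntegrable
    apply hMc.mono
    rw [Set.uIcc_of_le ht.1]
    exact Set.Icc_subset_Icc le_rfl ht.2
  -- continuity of Q
  have hQc : ContinuousOn Q (Set.Icc 0 T) := by
    have h := intervalIntegral.continuousOn_primitive_interval' (μ := volume) (f := M)
      (hMint T hTIcc) (Set.left_mem_uIcc)
    rw [Set.uIcc_of_le hT0] at h
    exact h.congr fun t ht => by rw [hQM t]
  -- Q t is a unit for t ∈ (0, T]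
  have hQunit : ∀ t ∈ Set.Ioc (0:ℝ) T, Qinv t = Ring.inverse (Q t) := by
    intro t ht
    have h1 := (hQinv t ht).1
    have h2 := (hQinv t ht).2
    symm
    exact Ring.inverse_unit ⟨Q t, Qinv t,
      by rw [ContinuousLinearMap.mul_def, h1, ContinuousLinearMap.one_def],
      by rw [ContinuousLinearMap.mul_def, h2, ContinuousLinearMap.one_def]⟩
  have hQinvc : ContinuousOn Qinv (Set.Ioc 0 T) := by
    intro t ht
    have hcmp : ContinuousWithinAt (fun s => Ring.inverse (Q s)) (Set.Ioc 0 T) t := by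
      have hu : ContinuousAt Ring.inverse (Q t) := by
        have h1 := (hQinv t ht).1
        have h2 := (hQinv t ht).2
        exact NormedRing.inverse_continuousAt ⟨Q t, Qinv t,
          by rw [ContinuousLinearMap.mul_def, h1, ContinuousLinearMap.one_def],
          by rw [ContinuousLinearMap.mul_def, h2, ContinuousLinearMap.one_def]⟩
      exact hu.comp_continuousWithinAt ((hQc.mono Set.Ioc_subset_Icc_self) t ht)
    exact hcmp.congr (fun s hs => hQunit s hs) (hQunit t ht)
  have hIocNhds : ∀ t ∈ Set.Ioo (0:ℝ) T, Set.Ioc 0 T ∈ nhds t := fun t ht =>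
    Filter.mem_of_superset (isOpen_Ioo.mem_nhds ht) Set.Ioo_subset_Ioc_self
  have hIccNhds : ∀ t ∈ Set.Ioo (0:ℝ) T, Set.Icc 0 T ∈ nhds t := fun t ht =>
    Filter.mem_of_superset (isOpen_Ioo.mem_nhds ht) Set.Ioo_subset_Icc_self
  -- continuity of f on (0, T]
  have hfc : ContinuousOn f (Set.Ioc 0 T) :=
    ((hξc.mono Set.Ioc_subset_Icc_self).pow 2).smul (hQinvc.clm_apply continuousOn_const)
  -- integrability of f
  have hfIoc : IntegrableOn f (Set.Ioc 0 T) := by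
    refine Integrable.mono' (g := fun _ => c * ξ T * ‖u‖)
      (integrableOn_const measure_Ioc_lt_top.ne)
      (hfc.aestronglyMeasurable measurableSet_Ioc) ?_
    refine (ae_restrict_iff' measurableSet_Ioc).2 (Filter.Eventually.of_forall ?_)
    intro s hs
    have hξs := hξpos s hs
    have h1 : ‖Qinv s u‖ ≤ c / ξ s * ‖u‖ :=
      le_trans ((Qinv s).le_opNorm u)
        (mul_le_mul_of_nonneg_right (hQbnd s hs) (norm_nonneg u))
    have h2 : ‖f s‖ = ξ s ^ 2 * ‖Qinv s u‖ := by
      rw [hfdef]; simp [norm_smul, abs_of_nonneg (sq_nonneg (ξ s))]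
    have h3 : ξ s ≤ ξ T := hξmono (Set.Ioc_subset_Icc_self hs) hTIcc hs.2
    rw [h2]
    calc ξ s ^ 2 * ‖Qinv s u‖ ≤ ξ s ^ 2 * (c / ξ s * ‖u‖) :=
          mul_le_mul_of_nonneg_left h1 (sq_nonneg _)
      _ = c * ξ s * ‖u‖ := by field_simp
      _ ≤ c * ξ T * ‖u‖ :=
          mul_le_mul_of_nonneg_right (mul_le_mul_of_nonneg_left h3 hc.le) (norm_nonneg u)
  have hfiv : ∀ a b : ℝ, 0 ≤ a → b ≤ T → a ≤ b → IntervalIntegrable f volume a b := by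
    intro a b ha hb hab
    exact (intervalIntegrable_iff_integrableOn_Ioc_of_le hab).2
      (hfIoc.mono_set (Set.Ioc_subset_Ioc ha hb))
  -- R as a difference of primitives, continuity of R
  have hRsub : ∀ t ∈ Set.Icc (0:ℝ) T,
      R t = (∫ s in (0:ℝ)..T, f s) - ∫ s in (0:ℝ)..t, f s := by
    intro t ht
    exact (intervalIntegral.integral_interval_sub_left (hfiv 0 T le_rfl le_rfl hT0)
      (hfiv 0 t le_rfl ht.2 ht.1)).symm
  have hRc : ContinuousOn R (Set.Icc 0 T) := by
    have := intervalIntegral.continuousOn_primitive_interval_left (μ := volume) (f := f)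
      (a := (0:ℝ)) (b := T) (by
        rw [Set.uIcc_of_le hT0, integrableOn_Icc_iff_integrableOn_Ioc]
        exact hfIoc)
    rwa [Set.uIcc_of_le hT0] at this
  -- derivative of R on (0, T)
  have hfAt : ∀ t ∈ Set.Ioo (0:ℝ) T, ContinuousAt f t := fun t ht =>
    (hfc t (Set.Ioo_subset_Ioc_self ht)).continuousAt (hIocNhds t ht)
  have hfcIoo : ContinuousOn f (Set.Ioo 0 T) := fun t ht => (hfAt t ht).continuousWithinAt
  have hRd : ∀ t ∈ Set.Ioo (0:ℝ) T, HasDerivAt R (-(f t)) t := by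
    intro t ht
    have h1 : HasDerivAt (fun x => ∫ s in (0:ℝ)..x, f s) (f t) t :=
      intervalIntegral.integral_hasDerivAt_right (hfiv 0 t le_rfl ht.2.le ht.1.le)
        (ContinuousOn.stronglyMeasurableAtFilter isOpen_Ioo hfcIoo t ht)
        (hfAt t ht)
    have h2 : HasDerivAt (fun x => (∫ s in (0:ℝ)..T, f s) - ∫ s in (0:ℝ)..x, f s)
        (-(f t)) t := by
      have h3 := (hasDerivAt_const t (∫ s in (0:ℝ)..T, f s)).sub h1
      rw [zero_sub] at h3
      exact h3
    refine h2.congr_of_eventuallyEq ?_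
    filter_upwards [hIccNhds t ht] with x hx
    exact hRsub x hx
  -- derivative of Q on (0, T)
  have hMcIoo : ContinuousOn M (Set.Ioo 0 T) := hMc.mono Set.Ioo_subset_Icc_self
  have hQd : ∀ t ∈ Set.Ioo (0:ℝ) T, HasDerivAt Q (M t) t := by
    intro t ht
    have h1 : HasDerivAt (fun x => ∫ s in (0:ℝ)..x, M s) (M t) t :=
      intervalIntegral.integral_hasDerivAt_right (hMint t (Set.Ioo_subset_Icc_self ht))
        (ContinuousOn.stronglyMeasurableAtFilter isOpen_Ioo hMcIoo t ht)
        ((hMc t (Set.Ioo_subset_Icc_self ht)).continuousAt (hIccNhds t ht))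
    exact h1.congr_of_eventuallyEq (Filter.Eventually.of_forall fun x => hQM x)
  -- G := Q · R and its derivative
  set G : ℝ → EuclideanSpace ℝ (Fin m) := fun t => Q t (R t) with hGdef
  have hGc : ContinuousOn G (Set.Icc 0 T) := hQc.clm_apply hRc
  have hGd : ∀ t ∈ Set.Ioo (0:ℝ) T,
      HasDerivAt G ((M t) (R t) - ξ t ^ 2 • u) t := by
    intro t ht
    have h := (hQd t ht).clm_apply (hRd t ht)
    have hQQinv : Q t (Qinv t u) = u := by
      have h1 := (hQinv t (Set.Ioo_subset_Ioc_self ht)).1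
      have := DFunLike.congr_fun h1 u
      simpa using this
    have heq : (M t) (R t) + Q t (-(f t)) = (M t) (R t) - ξ t ^ 2 • u := by
      rw [map_neg]
      rw [hfdef]
      simp only [_root_.map_smul, hQQinv]
      abel
    rwa [heq] at h
  -- FTC: ∫₀ᵀ (M t (R t) - ξ t ² • u) = G T - G 0 = 0
  have hRcont : ContinuousOn (fun t => (M t) (R t)) (Set.Icc 0 T) := hMc.clm_apply hRc
  have hderint : IntervalIntegrable (fun t => (M t) (R t) - ξ t ^ 2 • u) volume 0 T := by
    apply ContinuousOn.intervalIntegrable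
    rw [Set.uIcc_of_le hT0]
    exact hRcont.sub ((hξc.pow 2).smul continuousOn_const)
  have hFTC : (∫ t in (0:ℝ)..T, ((M t) (R t) - ξ t ^ 2 • u)) = G T - G 0 :=
    intervalIntegral.integral_eq_sub_of_hasDeriv_right_of_le hT0 hGc
      (fun t ht => (hGd t ht).hasDerivWithinAt) hderint
  have hGT : G T = 0 := by
    have : R T = 0 := by rw [hRdef]; simp
    rw [hGdef]; simp [this]
  have hG0 : G 0 = 0 := by
    have : Q 0 = 0 := by rw [hQM]; simp
    rw [hGdef]; simp [this]
  have hMRint : IntervalIntegrable (fun t => (M t) (R t)) volume 0 T := by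
    apply ContinuousOn.intervalIntegrable
    rw [Set.uIcc_of_le hT0]; exact hRcont
  have hξ2int : IntervalIntegrable (fun t => ξ t ^ 2 • u) volume 0 T := by
    apply ContinuousOn.intervalIntegrable
    rw [Set.uIcc_of_le hT0]; exact (hξc.pow 2).smul continuousOn_const
  have hMRu : (∫ t in (0:ℝ)..T, (M t) (R t)) = J • u := by
    have h1 : (∫ t in (0:ℝ)..T, ((M t) (R t) - ξ t ^ 2 • u))
        = (∫ t in (0:ℝ)..T, (M t) (R t)) - ∫ t in (0:ℝ)..T, ξ t ^ 2 • u :=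
      intervalIntegral.integral_sub hMRint hξ2int
    have h2 : (∫ t in (0:ℝ)..T, ξ t ^ 2 • u) = J • u := by
      rw [hJdef, ← intervalIntegral.integral_smul_const]
    rw [hFTC, hGT, hG0, sub_zero] at h1
    rw [h2] at h1
    exact sub_eq_zero.1 h1.symm
  -- J is positive
  have hJpos : (0:ℝ) < J := by
    rw [hJdef]
    apply intervalIntegral.intervalIntegral_pos_of_pos_on
    · apply ContinuousOn.intervalIntegrable
      rw [Set.uIcc_of_le hT0]; exact hξc.pow 2
    · intro x hx
      exact pow_pos (hξpos x (Set.Ioo_subset_Ioc_self hx)) 2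
    · exact hT
  have hJne : J ≠ 0 := hJpos.ne'
  -- integrability of the three pieces
  have hint1 : IntervalIntegrable (fun t => ((T - t) / T) • (𝒦 t) (N t v2)) volume 0 T := by
    apply ContinuousOn.intervalIntegrable
    rw [Set.uIcc_of_le hT0]
    exact ((continuousOn_const.sub continuousOn_id).div_const T).smul
      (h𝒦.clm_apply (hN.clm_apply continuousOn_const))
  have hint2 : IntervalIntegrable (fun t => (M t) (Qinv T w)) volume 0 T := by
    apply ContinuousOn.intervalIntegrable
    rw [Set.uIcc_of_le hT0]
    exact hMc.clm_apply continuousOn_const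
  have hint3 : IntervalIntegrable (fun t => J⁻¹ • (M t) (R t)) volume 0 T :=
    hMRint.smul J⁻¹
  -- rewrite the integrand
  have hcongr : Set.EqOn (fun t => (𝒦 t) (N t (α t)))
      (fun t => ((T - t) / T) • (𝒦 t) (N t v2) - (M t) (Qinv T w) - J⁻¹ • (M t) (R t))
      (Set.uIcc 0 T) := by
    rw [Set.uIcc_of_le hT0]
    intro t ht
    simp only
    rw [hα t ht]
    simp only [map_sub, _root_.map_smul, hMdef, ContinuousLinearMap.smul_apply,
      ContinuousLinearMap.coe_comp', Function.comp_apply, hRdef, smul_smul]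
    rw [div_eq_inv_mul (φ t) J]
  -- the middle integral equals w
  have hw' : (∫ t in (0:ℝ)..T, (M t) (Qinv T w)) = w := by
    rw [← ContinuousLinearMap.intervalIntegral_apply (hMint T hTIcc), ← hQM T]
    have := DFunLike.congr_fun (hQinv T hTIoc).1 w
    simpa using this
  rw [intervalIntegral.integral_congr hcongr,
    intervalIntegral.integral_sub (hint1.sub hint2) hint3,
    intervalIntegral.integral_sub hint1 hint2,
    intervalIntegral.integral_smul, hMRu, hw']
  rw [smul_smul, inv_mul_cancel₀ hJne, one_smul]
  abel
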